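/- If f : (0,∞) → (0,∞) satisfies (1-z)·f(x) = f(f(xz)·(1-z)/z) for all x > 0 and 0 < z < 1, then f(x) ≤ x for all x > 0. -/

import Mathlib

theorem stmt1 (f : ℝ → ℝ) (hpos : ∀ x : ℝ, 0 < x → 0 < f x)
    (heq : ∀ x : ℝ, 0 < x → ∀ z : ℝ, 0 < z → z < 1 →
      (1 - z) * f x = f (f (x * z) * ((1 - z) / z))) :
    ∀ x : ℝ, 0 < x → f x ≤ x := by
  intro x hx
  by_contra h
  push_neg at h
  have hfx : 0 < f x := hpos x hx
  set z : ℝ := 1 - x / f x with hz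
  have hz0 : 0 < z := by
    have : x / f x < 1 := (div_lt_one hfx).mpr h
    rw [hz]; linarith
  have hz1 : z < 1 := by
    have : 0 < x / f x := div_pos hx hfx
    rw [hz]; linarith
  have hX : 0 < x / z := div_pos hx hz0
  have hXz : (x / z) * z = x := div_mul_cancel₀ x hz0.ne'
  have key := heq (x / z) hX z hz0 hz1
  rw [hXz] at key
  have h1z : 1 - z = x / f x := by rw [hz]; ring
  have harg : f x * ((1 - z) / z) = x / z := by
    rw [h1z]
    field_simp
  rw [harg] at key
  have hfX : 0 < f (x / z) := hpos _ hX
  nlinarith [key, hfX, hz0]
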